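/- Let f : ℝⁿ → ℝ be twice continuously differentiable with Hessian Lipschitz continuous with constant L (in operator norm). Then for all x, x′, y ∈ ℝⁿ, ‖ ∇²f(x)(y − x) − ( ∇²f(x′)(y − x′) + ∇f(x′) − ∇f(x) ) ‖ ≤ (L/2) ( ‖y − x′‖² + ‖y − x‖² ). -/

import Mathlib

lemma taylor_quadratic_bound {E F : Type*} [NormedAddCommGroup E] [NormedSpace ℝ E]
    [NormedAddCommGroup F] [NormedSpace ℝ F]
    (g : E → F) (hess : E → E →L[ℝ] F) (L : ℝ)
    (hhess : ∀ u, HasFDerivAt g (hess u) u)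
    (hLip : ∀ u v, ‖hess u - hess v‖ ≤ L * ‖u - v‖)
    (x y : E) : ‖g y - g x - hess x (y - x)‖ ≤ L / 2 * ‖y - x‖ ^ 2 := by
  set v := y - x with hv
  set φ : ℝ → F := fun t => g (x + t • v) - t • hess x v with hφ
  have hφ' : ∀ t : ℝ, HasDerivAt φ ((hess (x + t • v) - hess x) v) t := by
    intro t
    have h1 : HasDerivAt (fun t : ℝ => x + t • v) v t := by
      simpa using ((hasDerivAt_id t).smul_const v).const_add x
    have h2 : HasDerivAt (fun t : ℝ => g (x + t • v)) (hess (x + t • v) v) t :=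
      (hhess (x + t • v)).comp_hasDerivAt t h1
    have h3 : HasDerivAt (fun t : ℝ => t • hess x v) (hess x v) t := by
      simpa using (hasDerivAt_id t).smul_const (hess x v)
    rw [ContinuousLinearMap.sub_apply]; exact h2.sub h3
  have key : ∀ t ∈ Set.Icc (0:ℝ) 1, ‖φ t - φ 0‖ ≤ L * ‖v‖ ^ 2 * t ^ 2 / 2 := by
    intro t ht
    have := image_norm_le_of_norm_deriv_right_le_deriv_boundary
      (f := fun t => φ t - φ 0) (a := 0) (b := 1)
      (f' := fun t => (hess (x + t • v) - hess x) v)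
      (B := fun t => L * ‖v‖ ^ 2 * t ^ 2 / 2) (B' := fun t => L * ‖v‖ ^ 2 * t)
      (fun s _ => (((hφ' s).sub_const (φ 0)).continuousAt).continuousWithinAt)
      (fun s hs => ((hφ' s).sub_const (φ 0)).hasDerivWithinAt.mono (by
        intro a ha; exact ha))
      (by simp)
      (fun s => by
        have : HasDerivAt (fun t : ℝ => L * ‖v‖ ^ 2 * t ^ 2 / 2) (L * ‖v‖ ^ 2 * s) s := by
          have := ((hasDerivAt_pow 2 s).const_mul (L * ‖v‖ ^ 2)).div_const 2
          refine this.congr_deriv ?_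
          ring
        exact this)
      (fun s hs => by
        have h0 : ‖(hess (x + s • v) - hess x) v‖ ≤ ‖hess (x + s • v) - hess x‖ * ‖v‖ :=
          (hess (x + s • v) - hess x).le_opNorm v
        have h1 : ‖hess (x + s • v) - hess x‖ ≤ L * ‖s • v‖ := by
          simpa using hLip (x + s • v) x
        have h2 : ‖s • v‖ = s * ‖v‖ := by
          rw [norm_smul, Real.norm_eq_abs, abs_of_nonneg hs.1]
        calc ‖(hess (x + s • v) - hess x) v‖ ≤ L * (s * ‖v‖) * ‖v‖ := by
              refine h0.trans (mul_le_mul_of_nonneg_right ?_ (norm_nonneg v))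
              rw [← h2]; exact h1
          _ = L * ‖v‖ ^ 2 * s := by ring)
      ht
    simpa using this
  have h1 := key 1 (by norm_num)
  have hφ1 : φ 1 - φ 0 = g y - g x - hess x v := by
    simp [hφ, hv]
    abel
  rw [hφ1] at h1
  calc ‖g y - g x - hess x (y - x)‖ ≤ L * ‖v‖ ^ 2 * 1 ^ 2 / 2 := h1
    _ = L / 2 * ‖y - x‖ ^ 2 := by rw [hv]; ring

/-- The error bound of Section 3.2 of the paper for reusing Hessian-vector products from a
previous iterate `x′` at a new iterate `x` via the gradient correction
`z′ + ∇f(x′) − ∇f(x)`. -/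
theorem hvp_correction_error_bound
    {n : ℕ} (f : EuclideanSpace ℝ (Fin n) → ℝ)
    (g : EuclideanSpace ℝ (Fin n) → EuclideanSpace ℝ (Fin n))
    (hess : EuclideanSpace ℝ (Fin n) → EuclideanSpace ℝ (Fin n) →L[ℝ] EuclideanSpace ℝ (Fin n))
    (L : ℝ)
    (hg : ∀ u, HasGradientAt f (g u) u)
    (hhess : ∀ u, HasFDerivAt g (hess u) u)
    (hLip : ∀ u v, ‖hess u - hess v‖ ≤ L * ‖u - v‖)
    (x x' y : EuclideanSpace ℝ (Fin n)) :
    ‖hess x (y - x) - (hess x' (y - x') + g x' - g x)‖ ≤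
      L / 2 * (‖y - x'‖ ^ 2 + ‖y - x‖ ^ 2) := by
  have hx := taylor_quadratic_bound g hess L hhess hLip x y
  have hx' := taylor_quadratic_bound g hess L hhess hLip x' y
  have heq : hess x (y - x) - (hess x' (y - x') + g x' - g x)
      = (g y - g x' - hess x' (y - x')) - (g y - g x - hess x (y - x)) := by abel
  rw [heq]
  calc ‖(g y - g x' - hess x' (y - x')) - (g y - g x - hess x (y - x))‖
      ≤ ‖g y - g x' - hess x' (y - x')‖ + ‖g y - g x - hess x (y - x)‖ := norm_sub_le _ _
    _ ≤ L / 2 * ‖y - x'‖ ^ 2 + L / 2 * ‖y - x‖ ^ 2 := add_le_add hx' hx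
    _ = L / 2 * (‖y - x'‖ ^ 2 + ‖y - x‖ ^ 2) := by ring
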